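/- Let n₃ be the 3-dimensional real Heisenberg Lie algebra with basis e₁,e₂,e₃ and brackets [e₁,e₂]=e₃, [e₁,e₃]=[e₂,e₃]=0, and let D ∈ δ⁺(n₃) have matrix with columns (x₁₁,x₂₁,x₃₁), (x₁₂,x₂₂,x₃₂), (0,0,x₁₁+x₂₂) with respect to e₁,e₂,e₃. Then D is conjugate by an automorphism of n₃ to the derivation D̃ whose matrix with respect to e₁,e₂,e₃ has columns (x₁₁,x₂₁,0), (x₁₂,x₂₂,0), (0,0,x₁₁+x₂₂); that is, there exists A ∈ Aut(n₃) with A ∘ D = D̃ ∘ A. -/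

import Mathlib

open Module

/-- `D` is a derivation of the real Lie algebra `L`. -/
def IsLieDeriv {L : Type*} [LieRing L] [LieAlgebra ℝ L] (D : Module.End ℝ L) : Prop :=
  ∀ x y : L, D ⁅x, y⁆ = ⁅D x, y⁆ + ⁅x, D y⁆

/-- All eigenvalues (complex roots of the characteristic polynomial) of `f` have
positive real part. -/
def PosSpec {V : Type*} [AddCommGroup V] [Module ℝ V] [Module.Finite ℝ V]
    (f : Module.End ℝ V) : Prop :=
  ∀ z ∈ ((LinearMap.charpoly f).map (algebraMap ℝ ℂ)).roots, 0 < z.re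

theorem stmt7 {L : Type*} [LieRing L] [LieAlgebra ℝ L] [Module.Finite ℝ L]
    (e : Basis (Fin 3) ℝ L)
    (h12 : ⁅e 0, e 1⁆ = e 2) (h13 : ⁅e 0, e 2⁆ = 0) (h23 : ⁅e 1, e 2⁆ = 0)
    (D : Module.End ℝ L) (hD : IsLieDeriv D) (hpos : PosSpec D)
    (x11 x21 x31 x12 x22 x32 : ℝ)
    (h0 : D (e 0) = x11 • e 0 + x21 • e 1 + x31 • e 2)
    (h1 : D (e 1) = x12 • e 0 + x22 • e 1 + x32 • e 2)
    (h2 : D (e 2) = (x11 + x22) • e 2) :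
    ∃ (D' : Module.End ℝ L) (A : L ≃ₗ⁅ℝ⁆ L),
      D' (e 0) = x11 • e 0 + x21 • e 1 ∧
      D' (e 1) = x12 • e 0 + x22 • e 1 ∧
      D' (e 2) = (x11 + x22) • e 2 ∧
      ∀ y : L, A (D y) = D' (A y) := by
  -- determinant of the 2×2 block is nonzero
  have hd : x11 * x22 - x12 * x21 ≠ 0 := by
    intro hdet
    have hM : LinearMap.toMatrix e e D =
        !![x11, x12, 0; x21, x22, 0; x31, x32, x11 + x22] := by
      ext i j
      rw [LinearMap.toMatrix_apply]
      fin_cases i <;> fin_cases j <;>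
        simp [h0, h1, h2, Fin.isValue, Matrix.cons_val_zero, Matrix.cons_val_one]
    have hdet3 : (LinearMap.toMatrix e e D).det = 0 := by
      rw [hM, Matrix.det_fin_three]
      simp [Matrix.cons_val_zero, Matrix.cons_val_one]
      linear_combination (x11 + x22) * hdet
    have hc0 : (LinearMap.charpoly D).eval 0 = 0 := by
      rw [← Polynomial.coeff_zero_eq_eval_zero, ← D.charpoly_toMatrix e]
      have := Matrix.det_eq_sign_charpoly_coeff (LinearMap.toMatrix e e D)
      rw [hdet3] at this
      have h3 : Fintype.card (Fin 3) = 3 := by simp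
      rw [h3] at this
      have : (-1 : ℝ)^3 * ((LinearMap.toMatrix e e D).charpoly.coeff 0) = 0 := this.symm
      linarith [this]
    have hroot : (0 : ℂ) ∈ ((LinearMap.charpoly D).map (algebraMap ℝ ℂ)).roots := by
      rw [Polynomial.mem_roots']
      refine ⟨((LinearMap.charpoly_monic D).map _).ne_zero, ?_⟩
      rw [Polynomial.IsRoot, Polynomial.eval_map, Polynomial.eval₂_at_zero,
        Polynomial.coeff_zero_eq_eval_zero, hc0, map_zero]
    have := hpos 0 hroot
    simp at this
  obtain ⟨a, b, key0, key1⟩ :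
      ∃ a b : ℝ, x11 * a + x21 * b + x31 = a * (x11 + x22) ∧
        x12 * a + x22 * b + x32 = b * (x11 + x22) :=
    ⟨(x11 * x31 + x21 * x32) / (x11 * x22 - x12 * x21),
     (x12 * x31 + x22 * x32) / (x11 * x22 - x12 * x21),
     by have hd' : x11 * x22 - x21 * x12 ≠ 0 := by rwa [mul_comm x21 x12]
        field_simp; ring,
     by have hd' : x11 * x22 - x21 * x12 ≠ 0 := by rwa [mul_comm x21 x12]
        field_simp; ring⟩
  -- other bracket relations
  have h21 : ⁅e 1, e 0⁆ = -e 2 := by rw [← lie_skew, h12]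
  have h31 : ⁅e 2, e 0⁆ = 0 := by rw [← lie_skew, h13, neg_zero]
  have h32 : ⁅e 2, e 1⁆ = 0 := by rw [← lie_skew, h23, neg_zero]
  -- the automorphism
  set f : L →ₗ[ℝ] L := e.constr ℝ ![e 0 + a • e 2, e 1 + b • e 2, e 2] with hf
  set g : L →ₗ[ℝ] L := e.constr ℝ ![e 0 - a • e 2, e 1 - b • e 2, e 2] with hg
  have hf0 : f (e 0) = e 0 + a • e 2 := by simp [hf]
  have hf1 : f (e 1) = e 1 + b • e 2 := by simp [hf]
  have hf2 : f (e 2) = e 2 := by simp [hf]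
  have hg0 : g (e 0) = e 0 - a • e 2 := by simp [hg]
  have hg1 : g (e 1) = e 1 - b • e 2 := by simp [hg]
  have hg2 : g (e 2) = e 2 := by simp [hg]
  have hfg : f.comp g = LinearMap.id := by
    apply e.ext; intro i
    fin_cases i <;>
      simp [hg0, hg1, hg2, hf0, hf1, hf2, map_sub, map_smul]
  have hgf : g.comp f = LinearMap.id := by
    apply e.ext; intro i
    fin_cases i <;>
      simp [hg0, hg1, hg2, hf0, hf1, hf2, map_add, map_smul]
  have hbil : ∀ x y : L, f ⁅x, y⁆ = ⁅f x, f y⁆ := by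
    have key : (LinearMap.mk₂ ℝ (fun x y : L => f ⁅x, y⁆)
          (fun m₁ m₂ n => by simp [add_lie])
          (fun c m n => by simp [smul_lie])
          (fun m n₁ n₂ => by simp [lie_add])
          (fun c m n => by simp [lie_smul]))
        = (LinearMap.mk₂ ℝ (fun x y : L => ⁅f x, f y⁆)
          (fun m₁ m₂ n => by simp [add_lie])
          (fun c m n => by simp [smul_lie])
          (fun m n₁ n₂ => by simp [lie_add])
          (fun c m n => by simp [lie_smul])) := by
      apply LinearMap.ext_basis e e
      intro i j
      fin_cases i <;> fin_cases j <;>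
        simp [LinearMap.mk₂_apply, hf0, hf1, hf2, h12, h13, h23, h21, h31, h32,
          lie_add, add_lie, lie_smul, smul_lie]
    intro x y
    exact LinearMap.congr_fun (LinearMap.congr_fun key x) y
  -- D'
  set D' : Module.End ℝ L :=
    e.constr ℝ ![x11 • e 0 + x21 • e 1, x12 • e 0 + x22 • e 1, (x11 + x22) • e 2] with hD'
  have hD'0 : D' (e 0) = x11 • e 0 + x21 • e 1 := by simp [hD']
  have hD'1 : D' (e 1) = x12 • e 0 + x22 • e 1 := by simp [hD']
  have hD'2 : D' (e 2) = (x11 + x22) • e 2 := by simp [hD']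
  have hcomm : f.comp D = D'.comp f := by
    apply e.ext; intro i
    fin_cases i
    · show f (D (e 0)) = D' (f (e 0))
      rw [h0, hf0, map_add, map_add, map_add, map_smul, map_smul, map_smul, map_smul,
        hf0, hf1, hf2, hD'0, hD'2]
      match_scalars
      any_goals ring
      all_goals linear_combination key0
    · show f (D (e 1)) = D' (f (e 1))
      rw [h1, hf1, map_add, map_add, map_add, map_smul, map_smul, map_smul, map_smul,
        hf0, hf1, hf2, hD'1, hD'2]
      match_scalars
      any_goals ring
      all_goals linear_combination key1
    · show f (D (e 2)) = D' (f (e 2))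
      rw [h2, hf2, map_smul, hf2, hD'2]
  refine ⟨D', ⟨⟨f, fun {x y} => hbil x y⟩, g, ?_, ?_⟩, hD'0, hD'1, hD'2, ?_⟩
  · intro x; exact LinearMap.congr_fun hgf x
  · intro x; exact LinearMap.congr_fun hfg x
  · intro y; exact LinearMap.congr_fun hcomm y
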